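/- Let V be a real inner product space with inner product norm ‖·‖, let A : V → V be a bounded linear operator, and let k, m ∈ ℕ with k, m ≥ 1. Suppose (v_n)_{n≥1} is a bounded sequence in V, there exists M > 0 with ‖A^n v‖ ≤ M‖v‖ for all n ∈ ℕ and all v ∈ V, lim_{n→∞} ‖v_n − A v_{n−k}‖ = 0, and the sequence of operators A^{n+m} − A^n converges to 0 in operator norm as n → ∞. Then lim_{n→∞} ‖v_n − v_{n−km}‖ = 0. -/

import Mathlib

open Filter

/-- Let `V` be a real inner product space, `A : V → V` a bounded linear
operator, and `k, m ≥ 1`. Suppose `(v_n)` is a bounded sequence in `V`, there is `M > 0`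
with `‖A^n v‖ ≤ M‖v‖` for all `n` and `v`, `‖v_n − A v_{n−k}‖ → 0`, and
`A^{n+m} − A^n → 0` in operator norm. Then `‖v_n − v_{n−km}‖ → 0`. -/
theorem stmt_3 {V : Type*} [NormedAddCommGroup V] [InnerProductSpace ℝ V]
    (A : V →L[ℝ] V) (k m : ℕ) (hk : 1 ≤ k) (hm : 1 ≤ m)
    (v : ℕ → V) (hbdd : ∃ C : ℝ, ∀ n, ‖v n‖ ≤ C)
    (hM : ∃ M > (0 : ℝ), ∀ (n : ℕ) (w : V), ‖(A ^ n) w‖ ≤ M * ‖w‖)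
    (hlim : Tendsto (fun n => ‖v (n + k) - A (v n)‖) atTop (nhds 0))
    (hA : Tendsto (fun n => ‖A ^ (n + m) - A ^ n‖) atTop (nhds 0)) :
    Tendsto (fun n => ‖v (n + k * m) - v n‖) atTop (nhds 0) := by
  obtain ⟨C₀, hC₀⟩ := hbdd
  obtain ⟨M, hM0, hMle⟩ := hM
  set C : ℝ := max C₀ 1 with hCdef
  have hC : ∀ n, ‖v n‖ ≤ C := fun n => (hC₀ n).trans (le_max_left _ _)
  have hCpos : (0:ℝ) < C := lt_of_lt_of_le one_pos (le_max_right _ _)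
  -- For each fixed j, the iterated error tends to 0.
  have hE : ∀ j : ℕ, Tendsto (fun n => ‖v (n + j*k) - (A^j) (v n)‖) atTop (nhds 0) := by
    intro j
    induction j with
    | zero => simp only [Nat.zero_mul, Nat.add_zero, pow_zero, ContinuousLinearMap.one_apply, sub_self, norm_zero]; exact (tendsto_const_nhds : Tendsto (fun _ : ℕ => (0:ℝ)) atTop (nhds 0))
    | succ j ih =>
      have h1 : Tendsto (fun n => ‖v (n + k + j*k) - (A^j) (v (n+k))‖) atTop (nhds 0) :=
        ih.comp (tendsto_add_atTop_nat k)
      have h2 : Tendsto (fun n =>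
          ‖v (n + k + j*k) - (A^j) (v (n+k))‖ + M * ‖v (n+k) - A (v n)‖) atTop (nhds 0) := by
        simpa using h1.add (hlim.const_mul M)
      refine squeeze_zero (fun n => norm_nonneg _) (fun n => ?_) h2
      have key : v (n + (j+1)*k) - (A^(j+1)) (v n)
          = (v (n + k + j*k) - (A^j) (v (n+k))) + (A^j) (v (n+k) - A (v n)) := by
        have hn : n + (j+1)*k = n + k + j*k := by ring
        have hp : (A^(j+1)) (v n) = (A^j) (A (v n)) := by
          rw [pow_succ, ContinuousLinearMap.mul_apply]
        rw [hn, hp, map_sub]; abel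
      rw [key]
      calc ‖(v (n + k + j*k) - (A^j) (v (n+k))) + (A^j) (v (n+k) - A (v n))‖
          ≤ ‖v (n + k + j*k) - (A^j) (v (n+k))‖ + ‖(A^j) (v (n+k) - A (v n))‖ :=
            norm_add_le _ _
        _ ≤ ‖v (n + k + j*k) - (A^j) (v (n+k))‖ + M * ‖v (n+k) - A (v n)‖ :=
            add_le_add_right (hMle j _) _
  -- main ε-argument
  rw [Metric.tendsto_atTop]
  intro ε hε
  have hM1 : (0:ℝ) < M + 1 := by linarith
  -- choose j with ‖A^(j+m) - A^j‖ < ε / (4*C)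
  obtain ⟨j, hj⟩ := (Metric.tendsto_atTop.mp hA (ε / (4*C)) (by positivity))
  have hjop : ‖A^(j+m) - A^j‖ < ε / (4*C) := by
    have := hj j le_rfl
    rwa [Real.dist_eq, sub_zero, abs_of_nonneg (norm_nonneg _)] at this
  obtain ⟨N₁, hN₁⟩ := (Metric.tendsto_atTop.mp (hE m) (ε / 4) (by positivity))
  obtain ⟨N₂, hN₂⟩ := (Metric.tendsto_atTop.mp (hE j) (ε / (4*(M+1))) (by positivity))
  refine ⟨max N₁ (N₂ + j*k), fun n hn => ?_⟩
  rw [Real.dist_eq, sub_zero, abs_of_nonneg (norm_nonneg _)]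
  set p : ℕ := n - j*k with hpdef
  have hpn : n = p + j*k := by omega
  have hpN : N₂ ≤ p := by omega
  have hnN : N₁ ≤ n := le_trans (le_max_left _ _) hn
  -- errors
  have hEm : ‖v (n + m*k) - (A^m) (v n)‖ < ε / 4 := by
    have := hN₁ n hnN
    rwa [Real.dist_eq, sub_zero, abs_of_nonneg (norm_nonneg _)] at this
  have hEj : ‖v (p + j*k) - (A^j) (v p)‖ < ε / (4*(M+1)) := by
    have := hN₂ p hpN
    rwa [Real.dist_eq, sub_zero, abs_of_nonneg (norm_nonneg _)] at this
  set w : V := v p with hwdef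
  set E : V := v n - (A^j) w with hEdef
  have hEnorm : ‖E‖ < ε / (4*(M+1)) := by rw [hEdef, hpn]; exact hEj
  have hvn : v n = (A^j) w + E := by rw [hEdef]; abel
  have hpow : (A^(j+m)) w = (A^m) ((A^j) w) := by
    rw [add_comm j m, pow_add, ContinuousLinearMap.mul_apply]
  have key2 : (A^m) (v n) - v n = ((A^(j+m) - A^j) w) + ((A^m) E - E) := by
    rw [ContinuousLinearMap.sub_apply, hpow]
    conv_lhs => rw [hvn]
    rw [map_add]; abel
  -- bound the middle term
  have hmid : ‖(A^m) (v n) - v n‖ < ε / 4 + ε / 4 := by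
    rw [key2]
    have b1 : ‖(A^(j+m) - A^j) w‖ ≤ (ε / (4*C)) * C := by
      calc ‖(A^(j+m) - A^j) w‖ ≤ ‖A^(j+m) - A^j‖ * ‖w‖ :=
            ContinuousLinearMap.le_opNorm _ _
        _ ≤ (ε / (4*C)) * C :=
            mul_le_mul hjop.le (hC p) (norm_nonneg _) (by positivity)
    have b1' : (ε / (4*C)) * C = ε / 4 := by field_simp
    have b2 : ‖(A^m) E - E‖ < ε / 4 := by
      have h3 : ‖(A^m) E - E‖ ≤ M * ‖E‖ + ‖E‖ :=
        le_trans (norm_sub_le _ _) (add_le_add_left (hMle m E) _)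
      have h4 : M * ‖E‖ + ‖E‖ = (M+1) * ‖E‖ := by ring
      have h5 : (M+1) * ‖E‖ < (M+1) * (ε / (4*(M+1))) :=
        (mul_lt_mul_iff_right₀ hM1).mpr hEnorm
      have h6 : (M+1) * (ε / (4*(M+1))) = ε / 4 := by field_simp
      linarith
    calc ‖(A^(j+m) - A^j) w + ((A^m) E - E)‖
        ≤ ‖(A^(j+m) - A^j) w‖ + ‖(A^m) E - E‖ := norm_add_le _ _
      _ < ε / 4 + ε / 4 := by
          have := b1.trans_eq b1'
          linarith
  -- combine
  have hkm : n + k * m = n + m * k := by ring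
  calc ‖v (n + k*m) - v n‖
      = ‖(v (n + m*k) - (A^m) (v n)) + ((A^m) (v n) - v n)‖ := by rw [hkm]; congr 1; abel
    _ ≤ ‖v (n + m*k) - (A^m) (v n)‖ + ‖(A^m) (v n) - v n‖ := norm_add_le _ _
    _ < ε / 4 + (ε / 4 + ε / 4) := by linarith
    _ < ε := by linarith
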